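/- Let (R, P, X) be a subproblem where R is a clique, every vertex of P ∪ X is adjacent to all of R, and every vertex adjacent to all of R lies in R ∪ P ∪ X. Let u ∈ P with unique neighbor v in P. If N(u) ∩ X = ∅ or N(v) ∩ X = ∅, then R ∪ {u, v} is a maximal clique of G. -/

import Mathlib

open SimpleGraph

/-- A maximal clique: a clique not properly contained in any other clique. -/
def MaximalClique {V : Type*} (G : SimpleGraph V) (S : Set V) : Prop :=
  G.IsClique S ∧ ∀ T : Set V, G.IsClique T → S ⊆ T → S = T

/-- The graph obtained from `G` by deleting vertex `u` (removing all its incident edges). -/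
def delVert {V : Type*} (G : SimpleGraph V) (u : V) : SimpleGraph V where
  Adj a b := G.Adj a b ∧ a ≠ u ∧ b ≠ u
  symm := ⟨fun a b h => ⟨h.1.symm, h.2.2, h.2.1⟩⟩
  loopless := ⟨fun a h => G.ne_of_adj h.1 rfl⟩

theorem stmt_11 {V : Type*} [Fintype V] (G : SimpleGraph V) (R P X : Set V)
    (hR : G.IsClique R)
    (hadj : ∀ x ∈ P ∪ X, ∀ r ∈ R, G.Adj x r)
    (hdisj : Disjoint P X)
    (hclosed : ∀ x, (∀ r ∈ R, G.Adj x r) → x ∈ R ∪ P ∪ X)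
    (u v : V) (hu : u ∈ P)
    (hNu : G.neighborSet u ∩ P = {v})
    (hw : G.neighborSet u ∩ X = ∅ ∨ G.neighborSet v ∩ X = ∅) :
    MaximalClique G (R ∪ {u, v}) := by
  have hvmem : v ∈ G.neighborSet u ∩ P := by rw [hNu]; rfl
  have huv : G.Adj u v := hvmem.1
  have hvP : v ∈ P := hvmem.2
  have huR : ∀ r ∈ R, G.Adj u r := fun r hr => hadj u (Or.inl hu) r hr
  have hvR : ∀ r ∈ R, G.Adj v r := fun r hr => hadj v (Or.inl hvP) r hr
  have hclique : G.IsClique (R ∪ {u, v}) := by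
    intro a ha b hb hab
    rcases ha with ha | ha <;> rcases hb with hb | hb
    · exact hR ha hb hab
    · rcases hb with rfl | rfl
      · exact (huR a ha).symm
      · exact (hvR a ha).symm
    · rcases ha with rfl | rfl
      · exact huR b hb
      · exact hvR b hb
    · rcases ha with rfl | rfl <;> rcases hb with rfl | rfl
      · exact absurd rfl hab
      · exact huv
      · exact huv.symm
      · exact absurd rfl hab
  refine ⟨hclique, fun T hT hST => ?_⟩
  refine Set.Subset.antisymm hST fun w hwT => ?_
  by_contra hwS
  have huT : u ∈ T := hST (Or.inr (Or.inl rfl))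
  have hvT : v ∈ T := hST (Or.inr (Or.inr rfl))
  have hwu : G.Adj w u := hT hwT huT (fun h => hwS (Or.inr (Or.inl h)))
  have hwv : G.Adj w v := hT hwT hvT (fun h => hwS (Or.inr (Or.inr h)))
  have hwR : ∀ r ∈ R, G.Adj w r := fun r hr =>
    hT hwT (hST (Or.inl hr)) (fun h => hwS (Or.inl (h ▸ hr)))
  rcases hclosed w hwR with (hwR' | hwP) | hwX
  · exact hwS (Or.inl hwR')
  · have : w ∈ G.neighborSet u ∩ P := ⟨hwu.symm, hwP⟩
    rw [hNu] at this
    exact hwS (Or.inr (Or.inr this))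
  · rcases hw with h | h
    · exact absurd (h ▸ ⟨hwu.symm, hwX⟩ : w ∈ (∅ : Set V)) (fun h => h)
    · exact absurd (h ▸ ⟨hwv.symm, hwX⟩ : w ∈ (∅ : Set V)) (fun h => h)
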